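/- For every open cover 𝒰 of a Lindelöf regular (T3) space X, there exist a separable metrizable space Y, a continuous map f : X → Y, and an open cover 𝒱 of Y such that {f⁻¹(V) : V ∈ 𝒱} refines 𝒰. -/
import Mathlib

open Set Topology

/-- For every open cover 𝒰 of a Lindelöf regular (T3) space X, there exist a
separable metrizable space Y, a continuous map f : X → Y, and an open cover 𝒱 of Y such
that the preimages of members of 𝒱 refine 𝒰. -/
theorem lindelof_cover_refinement (X : Type*) [TopologicalSpace X] [LindelofSpace X]
    [T3Space X] (U : Set (Set X)) (hU : ∀ u ∈ U, IsOpen u) (hcov : ⋃₀ U = Set.univ) :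
    ∃ (Y : Type) (_ : MetricSpace Y), TopologicalSpace.SeparableSpace Y ∧
      ∃ (f : X → Y) (V : Set (Set Y)), Continuous f ∧ (∀ v ∈ V, IsOpen v) ∧
        ⋃₀ V = Set.univ ∧ ∀ v ∈ V, ∃ u ∈ U, f ⁻¹' v ⊆ u := by
  by_cases hX : Nonempty X
  swap
  · -- X is empty: take Y = Empty
    have : IsEmpty X := not_nonempty_iff.mp hX
    refine ⟨Empty, inferInstance, inferInstance, (fun x => (this.false x).elim), ∅,
      ⟨continuous_of_discreteTopology, by simp, by rw [Set.sUnion_empty]; exact (Set.univ_eq_empty_iff.mpr inferInstance).symm, by simp⟩⟩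
  -- For each x, pick u x ∈ U containing x, and an open W x with closure W x ⊆ u x
  have key : ∀ x : X, ∃ u ∈ U, ∃ W : Set X, IsOpen W ∧ x ∈ W ∧ closure W ⊆ u := by
    intro x
    have hx : x ∈ ⋃₀ U := hcov ▸ mem_univ x
    obtain ⟨u, huU, hxu⟩ := hx
    have hunhds : u ∈ 𝓝 x := (hU u huU).mem_nhds hxu
    obtain ⟨s, ⟨hs_nhds, hs_closed⟩, hsu⟩ := (closed_nhds_basis x).mem_iff.mp hunhds
    exact ⟨u, huU, interior s, isOpen_interior, mem_interior_iff_mem_nhds.mpr hs_nhds,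
      (closure_minimal interior_subset hs_closed).trans hsu⟩
  choose u huU W hWopen hxW hWu using key
  -- countable subcover
  obtain ⟨t, htct, htcov⟩ := isLindelof_univ.elim_countable_subcover W hWopen
    (fun x _ => mem_iUnion.mpr ⟨x, hxW x⟩)
  have htne : t.Nonempty := by
    rcases hX with ⟨x₀⟩
    rcases mem_iUnion₂.mp (htcov (mem_univ x₀)) with ⟨y, hy, _⟩
    exact ⟨y, hy⟩
  obtain ⟨e, he⟩ := htct.exists_eq_range htne
  -- Urysohn functions
  have hnorm : NormalSpace X := inferInstance
  have gkey : ∀ n : ℕ, ∃ g : C(X, ℝ), EqOn g 0 (u (e n))ᶜ ∧ EqOn g 1 (closure (W (e n))) ∧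
      ∀ x, g x ∈ Icc (0:ℝ) 1 := by
    intro n
    refine exists_continuous_zero_one_of_isClosed (isClosed_compl_iff.mpr (hU _ (huU (e n))))
      isClosed_closure ?_
    exact Set.disjoint_left.mpr fun x hx hx' => hx (hWu (e n) hx')
  choose g hg0 hg1 hg01 using gkey
  letI : MetricSpace (ℕ → ℝ) := PiCountable.metricSpace
  let f : X → (ℕ → ℝ) := fun x n => g n x
  have hf : Continuous f := continuous_pi fun n => (g n).continuous
  refine ⟨Set.range f, inferInstance, ?_, (fun x => ⟨f x, mem_range_self x⟩), ?_⟩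
  · -- separable
    infer_instance
  · refine ⟨Set.range (fun n => {y : Set.range f | (1/2 : ℝ) < (y : ℕ → ℝ) n}), ?_, ?_, ?_, ?_⟩
    · exact hf.subtype_mk _
    · rintro v ⟨n, rfl⟩
      exact isOpen_Ioi.preimage ((continuous_apply n).comp continuous_subtype_val)
    · ext y
      simp only [mem_sUnion, mem_univ, iff_true]
      obtain ⟨x, hx⟩ := y.2
      rcases mem_iUnion₂.mp (htcov (mem_univ x)) with ⟨z, hz, hxz⟩
      have : z ∈ Set.range e := he ▸ hz
      obtain ⟨n, rfl⟩ := this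
      refine ⟨_, ⟨n, rfl⟩, ?_⟩
      have : (y : ℕ → ℝ) n = 1 := by
        rw [← hx]
        exact hg1 n (subset_closure hxz)
      simp only [mem_setOf_eq, this]
      norm_num
    · rintro v ⟨n, rfl⟩
      refine ⟨u (e n), huU (e n), fun x hx => ?_⟩
      simp only [mem_preimage, mem_setOf_eq] at hx
      by_contra hxu
      have : g n x = 0 := hg0 n hxu
      rw [show f x n = g n x from rfl, this] at hx
      norm_num at hx
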